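/- Let f be a ϑ-self-concordant barrier on D_f ⊆ R_{>0}^n with gradient g, K = 4ϑ+1, and suppose x ∈ D_f satisfies x + (K+1)x_i e_i ∈ D_f for all i. Then all components of the gradient g(x) are negative, i.e., g_i(x) < 0 for all i ∈ [n]. -/

import Mathlib

/-- Local quadratic form `v ↦ vᵀ H v` induced by a Hessian matrix `H`. -/
noncomputable def quadForm {n : ℕ} (H : Matrix (Fin n) (Fin n) ℝ) (v : Fin n → ℝ) : ℝ :=
  dotProduct v (H.mulVec v)

lemma quadForm_nonneg {n : ℕ} {M : Matrix (Fin n) (Fin n) ℝ} (hM : M.PosSemidef)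
    (v : Fin n → ℝ) : 0 ≤ quadForm M v := by
  simpa [quadForm] using hM.dotProduct_mulVec_nonneg v

lemma quadForm_pos {n : ℕ} {M : Matrix (Fin n) (Fin n) ℝ} (hM : M.PosDef)
    {v : Fin n → ℝ} (hv : v ≠ 0) : 0 < quadForm M v := by
  simpa [quadForm] using hM.dotProduct_mulVec_pos hv

lemma quadForm_smul {n : ℕ} (M : Matrix (Fin n) (Fin n) ℝ) (t : ℝ) (v : Fin n → ℝ) :
    quadForm M (t • v) = t ^ 2 * quadForm M v := by
  simp only [quadForm, Matrix.mulVec_smul, dotProduct_smul, smul_dotProduct,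
    smul_eq_mul]
  ring

lemma dot_mulVec_symm {n : ℕ} {M : Matrix (Fin n) (Fin n) ℝ} (hM : M.IsHermitian)
    (v w : Fin n → ℝ) :
    dotProduct v (M.mulVec w) = dotProduct w (M.mulVec v) := by
  have hMt : M.transpose = M := by
    rw [← Matrix.conjTranspose_eq_transpose_of_trivial]; exact hM
  rw [Matrix.dotProduct_mulVec, ← Matrix.mulVec_transpose, hMt, dotProduct_comm]

lemma quadForm_CS {n : ℕ} {M : Matrix (Fin n) (Fin n) ℝ} (hM : M.PosDef)
    (v w : Fin n → ℝ) :
    (dotProduct v (M.mulVec w)) ^ 2 ≤ quadForm M v * quadForm M w := by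
  by_cases hv : v = 0
  · simp [hv, quadForm]
  · have hqv : 0 < quadForm M v := quadForm_pos hM hv
    set B : ℝ := dotProduct v (M.mulVec w) with hB
    set t : ℝ := B / quadForm M v with ht
    have h0 : 0 ≤ quadForm M (w - t • v) := quadForm_nonneg hM.posSemidef _
    have hsym : dotProduct w (M.mulVec v) = B := by
      rw [hB, dot_mulVec_symm hM.1]
    have hexp : quadForm M (w - t • v)
        = quadForm M w - 2 * t * B + t ^ 2 * quadForm M v := by
      simp only [quadForm, Matrix.mulVec_sub, Matrix.mulVec_smul, sub_dotProduct,
        dotProduct_sub, smul_dotProduct, dotProduct_smul, smul_eq_mul]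
      rw [show dotProduct v (M.mulVec w) = B from rfl, hsym]
      ring
    have htq : t * quadForm M v = B := div_mul_cancel₀ _ hqv.ne'
    nlinarith [h0, hexp, htq, hqv]

set_option maxHeartbeats 1000000 in
/-- for a ϑ-self-concordant barrier with domain in the positive orthant,
at a point `x` with `x + (K+1)xᵢeᵢ ∈ D` for all `i` (`K = 4ϑ+1`), all components of the
gradient are negative. -/
theorem stmt4 (n : ℕ) (D : Set (Fin n → ℝ)) (f : (Fin n → ℝ) → ℝ)
    (g : (Fin n → ℝ) → (Fin n → ℝ))
    (H : (Fin n → ℝ) → Matrix (Fin n) (Fin n) ℝ)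
    (θ : ℝ)
    (hopen : IsOpen D) (hconv : Convex ℝ D)
    (hDpos : ∀ x ∈ D, ∀ i, 0 < x i)
    (hf : ContDiffOn ℝ 2 f D)
    (hgrad : ∀ x ∈ D, ∀ v : Fin n → ℝ, fderiv ℝ f x v = dotProduct (g x) v)
    (hHess : ∀ x ∈ D, ∀ v w : Fin n → ℝ,
      fderiv ℝ (fun y => dotProduct (g y) v) x w = dotProduct v ((H x).mulVec w))
    (hposdef : ∀ x ∈ D, (H x).PosDef)
    (hsc1 : ∀ x ∈ D, ∀ y : Fin n → ℝ, quadForm (H x) (y - x) < 1 → y ∈ D)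
    (hsc2 : ∀ x ∈ D, ∀ y : Fin n → ℝ, quadForm (H x) (y - x) < 1 →
      ∀ v : Fin n → ℝ, v ≠ 0 →
        1 - Real.sqrt (quadForm (H x) (y - x)) ≤
            Real.sqrt (quadForm (H y) v) / Real.sqrt (quadForm (H x) v) ∧
        Real.sqrt (quadForm (H y) v) / Real.sqrt (quadForm (H x) v) ≤
            1 / (1 - Real.sqrt (quadForm (H x) (y - x))))
    (hθ : ∀ x ∈ D, quadForm (H x) ((H x)⁻¹.mulVec (g x)) ≤ θ)
    (K : ℝ) (hK : K = 4 * θ + 1)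
    (x : Fin n → ℝ) (hx : x ∈ D)
    (hx1 : ∀ i : Fin n, x + ((K + 1) * x i) • (Pi.single i 1 : Fin n → ℝ) ∈ D)
    :
    ∀ i : Fin n, g x i < 0 := by
  intro i
  by_contra hneg
  push_neg at hneg
  -- θ is nonnegative
  have hθ0 : 0 ≤ θ :=
    le_trans (quadForm_nonneg (hposdef x hx).posSemidef _) (hθ x hx)
  have hxi : 0 < x i := hDpos x hx i
  have hKpos : (0:ℝ) < K + 1 := by rw [hK]; linarith
  have hcpos : 0 < (K + 1) * x i := mul_pos hKpos hxi
  set v : Fin n → ℝ := ((K + 1) * x i) • (Pi.single i 1 : Fin n → ℝ) with hv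
  have hv0 : v ≠ 0 := by
    intro h
    have hvi : v i = 0 := by rw [h]; rfl
    rw [hv] at hvi
    simp [Pi.single_eq_same] at hvi
    rcases hvi with h1 | h1
    · exact absurd h1 (ne_of_gt hKpos)
    · exact absurd h1 (ne_of_gt hxi)
  have hyD : x + v ∈ D := hx1 i
  -- the Hessian is large in direction i: xᵢ² Hᵢᵢ ≥ 1
  have hq_i : 1 ≤ (x i) ^ 2 * quadForm (H x) (Pi.single i 1) := by
    by_contra hlt
    push_neg at hlt
    have hmem : x - (x i) • (Pi.single i 1 : Fin n → ℝ) ∈ D := by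
      apply hsc1 x hx
      have hdiff : (x - (x i) • (Pi.single i 1 : Fin n → ℝ)) - x
          = (-(x i)) • (Pi.single i 1 : Fin n → ℝ) := by
        funext j; simp
        try ring
      rw [hdiff, quadForm_smul]
      nlinarith [hlt]
    have hcontra := hDpos _ hmem i
    simp [Pi.single_eq_same] at hcontra
  -- quantities r², r
  set r2 : ℝ := quadForm (H x) v with hr2def
  have hr2nn : 0 ≤ r2 := quadForm_nonneg (hposdef x hx).posSemidef v
  have hr2big : (K + 1) ^ 2 ≤ r2 := by
    rw [hr2def, hv, quadForm_smul]
    nlinarith [hq_i, sq_nonneg (K + 1)]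
  set r : ℝ := Real.sqrt r2 with hrdef
  have hr2eq : r2 = r ^ 2 := (Real.sq_sqrt hr2nn).symm
  have hrK : K + 1 ≤ r := by
    rw [hrdef, ← Real.sqrt_sq hKpos.le]
    exact Real.sqrt_le_sqrt hr2big
  have hr1 : 2 ≤ r := by rw [hK] at hrK; linarith
  have hrpos : 0 < r := by linarith
  -- the segment
  set γ : ℝ → (Fin n → ℝ) := fun t => x + t • v with hγ
  have hmemD : ∀ t ∈ Set.Icc (0:ℝ) 1, γ t ∈ D := by
    intro t ht
    have hmem := hconv hx hyD (sub_nonneg.2 ht.2) ht.1 (by ring)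
    have heq : (1 - t) • x + t • (x + v) = γ t := by
      funext j; simp [hγ]; ring
    rwa [heq] at hmem
  set χ : ℝ → ℝ := fun t => dotProduct (g (γ t)) v with hχ
  set ψ2 : ℝ → ℝ := fun t => quadForm (H (γ t)) v with hψ2
  have hψ2nn : ∀ t ∈ Set.Icc (0:ℝ) 1, 0 ≤ ψ2 t := fun t ht =>
    quadForm_nonneg (hposdef _ (hmemD t ht)).posSemidef v
  -- derivative of χ
  have hderiv : ∀ t ∈ Set.Icc (0:ℝ) 1, HasDerivAt χ (ψ2 t) t := by
    intro t ht
    have hzD := hmemD t ht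
    have hdiff : DifferentiableAt ℝ (fun y => dotProduct (g y) v) (γ t) := by
      by_contra hnd
      have h0 := fderiv_zero_of_not_differentiableAt hnd
      have hh := hHess (γ t) hzD v v
      rw [h0] at hh
      simp only [ContinuousLinearMap.zero_apply] at hh
      exact (quadForm_pos (hposdef _ hzD) hv0).ne' hh.symm
    have hcurve : HasDerivAt γ v t := by
      have h1 : HasDerivAt (fun s : ℝ => s • v) ((1:ℝ) • v) t := (hasDerivAt_id t).smul_const v
      simpa [hγ] using h1.const_add x
    have hcomp := (hdiff.hasFDerivAt).comp_hasDerivAt t hcurve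
    have heq := hHess (γ t) hzD v v
    rw [heq] at hcomp
    exact hcomp
  -- t0
  set t0 : ℝ := 1 / (2 * r) with ht0def
  have ht0pos : 0 < t0 := by rw [ht0def]; positivity
  have ht0r : t0 * r = 1 / 2 := by rw [ht0def]; field_simp; try ring
  have ht0le : t0 ≤ 1 / 4 := by
    rw [ht0def, div_le_div_iff₀ (by positivity) (by norm_num)]
    linarith
  have hsub : Set.Icc (0:ℝ) t0 ⊆ Set.Icc (0:ℝ) 1 :=
    Set.Icc_subset_Icc le_rfl (by linarith)
  -- Dikin ellipsoid lower bound on ψ2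
  have hψlow : ∀ t ∈ Set.Icc (0:ℝ) t0, r ^ 2 * (1 - t * r) ^ 2 ≤ ψ2 t := by
    intro t ht
    have ht1 : t ∈ Set.Icc (0:ℝ) 1 := hsub ht
    have hzD := hmemD t ht1
    have htr : t * r ≤ 1 / 2 := by
      calc t * r ≤ t0 * r := mul_le_mul_of_nonneg_right ht.2 hrpos.le
        _ = 1 / 2 := ht0r
    have htr0 : 0 ≤ t * r := mul_nonneg ht.1 hrpos.le
    have hdiffeq : γ t - x = t • v := by funext j; simp [hγ]
    have hdiffpt : quadForm (H x) (γ t - x) = (t * r) ^ 2 := by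
      rw [hdiffeq, quadForm_smul, ← hr2def, hr2eq]; ring
    have hcond : quadForm (H x) (γ t - x) < 1 := by rw [hdiffpt]; nlinarith
    have hlow := (hsc2 x hx (γ t) hcond v hv0).1
    rw [hdiffpt, Real.sqrt_sq htr0] at hlow
    have hsqr : Real.sqrt (quadForm (H x) v) = r := by rw [← hr2def, ← hrdef]
    rw [hsqr, le_div_iff₀ hrpos] at hlow
    -- hlow : (1 - t*r) * r ≤ sqrt (ψ2 t)
    have h2 : 0 ≤ (1 - t * r) * r := by nlinarith
    have h3 := mul_self_le_mul_self h2 hlow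
    rw [Real.mul_self_sqrt (hψ2nn t ht1)] at h3
    nlinarith [h3]
  -- Cauchy–Schwarz bound
  have hCS : ∀ t ∈ Set.Icc (0:ℝ) 1, (χ t) ^ 2 ≤ θ * ψ2 t := by
    intro t ht
    have hzD := hmemD t ht
    have hMpd := hposdef _ hzD
    have hdet : IsUnit (H (γ t)).det := isUnit_iff_ne_zero.2 hMpd.det_pos.ne'
    have hginv : (H (γ t)).mulVec ((H (γ t))⁻¹.mulVec (g (γ t))) = g (γ t) := by
      rw [Matrix.mulVec_mulVec, Matrix.mul_nonsing_inv _ hdet, Matrix.one_mulVec]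
    have hrw : χ t = dotProduct v ((H (γ t)).mulVec ((H (γ t))⁻¹.mulVec (g (γ t)))) := by
      rw [hginv, hχ]
      exact dotProduct_comm (g (γ t)) v
    have hcs := quadForm_CS hMpd v ((H (γ t))⁻¹.mulVec (g (γ t)))
    have hθb := hθ (γ t) hzD
    have hψnn : 0 ≤ ψ2 t := hψ2nn t ht
    calc (χ t) ^ 2
        = (dotProduct v ((H (γ t)).mulVec ((H (γ t))⁻¹.mulVec (g (γ t))))) ^ 2 := by
          rw [hrw]
      _ ≤ quadForm (H (γ t)) v * quadForm (H (γ t)) ((H (γ t))⁻¹.mulVec (g (γ t))) := hcs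
      _ ≤ quadForm (H (γ t)) v * θ := mul_le_mul_of_nonneg_left hθb hψnn
      _ = θ * ψ2 t := by rw [mul_comm]
  -- χ is monotone on [0,1]
  have hχmono : MonotoneOn χ (Set.Icc (0:ℝ) 1) := by
    apply monotoneOn_of_deriv_nonneg (convex_Icc 0 1)
    · intro t ht; exact (hderiv t ht).continuousAt.continuousWithinAt
    · intro t ht
      rw [interior_Icc] at ht
      exact (hderiv t (Set.Ioo_subset_Icc_self ht)).differentiableAt.differentiableWithinAt
    · intro t ht
      rw [interior_Icc] at ht
      rw [(hderiv t (Set.Ioo_subset_Icc_self ht)).deriv]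
      exact hψ2nn t (Set.Ioo_subset_Icc_self ht)
  -- lower bound on χ t0
  set P : ℝ → ℝ := fun t => r ^ 2 * t - r ^ 3 * t ^ 2 + r ^ 4 * t ^ 3 / 3 with hP
  have hPderiv : ∀ t : ℝ, HasDerivAt P (r ^ 2 - 2 * r ^ 3 * t + r ^ 4 * t ^ 2) t := by
    intro t
    have h1 : HasDerivAt (fun t : ℝ => r ^ 2 * t) (r ^ 2) t := by
      simpa using (hasDerivAt_id t).const_mul (r ^ 2)
    have h2 : HasDerivAt (fun t : ℝ => r ^ 3 * t ^ 2) (r ^ 3 * (2 * t)) t := by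
      simpa using (hasDerivAt_pow 2 t).const_mul (r ^ 3)
    have h3 : HasDerivAt (fun t : ℝ => r ^ 4 * t ^ 3 / 3) (r ^ 4 * (3 * t ^ 2) / 3) t := by
      simpa using ((hasDerivAt_pow 3 t).const_mul (r ^ 4)).div_const 3
    have := (h1.sub h2).add h3
    exact this.congr_deriv (by ring)
  have hGmono : MonotoneOn (fun t => χ t - P t) (Set.Icc (0:ℝ) t0) := by
    apply monotoneOn_of_deriv_nonneg (convex_Icc 0 t0)
    · intro t ht
      exact ((hderiv t (hsub ht)).sub (hPderiv t)).continuousAt.continuousWithinAt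
    · intro t ht
      rw [interior_Icc] at ht
      exact ((hderiv t (hsub (Set.Ioo_subset_Icc_self ht))).sub
        (hPderiv t)).differentiableAt.differentiableWithinAt
    · intro t ht
      rw [interior_Icc] at ht
      have ht' := Set.Ioo_subset_Icc_self ht
      rw [show deriv (fun t => χ t - P t) t = _ from ((hderiv t (hsub ht')).sub (hPderiv t)).deriv]
      nlinarith [hψlow t ht']
  have hχt0 : 7 * r / 24 ≤ χ t0 := by
    have h0 : χ 0 - P 0 ≤ χ t0 - P t0 :=
      hGmono ⟨le_rfl, ht0pos.le⟩ ⟨ht0pos.le, le_rfl⟩ ht0pos.le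
    have hγ0 : γ 0 = x := by funext j; simp [hγ]
    have hχ0 : 0 ≤ χ 0 := by
      have hχ0eq : χ 0 = ((K + 1) * x i) * g x i := by
        show dotProduct (g (γ 0)) v = _
        rw [hγ0, hv]
        simp [dotProduct_smul, dotProduct_single, smul_eq_mul]
        try ring
      rw [hχ0eq]
      exact mul_nonneg hcpos.le hneg
    have hP0 : P 0 = 0 := by simp [hP]
    have hPt0 : P t0 = 7 * r / 24 := by
      rw [hP, ht0def]
      field_simp
      ring
    rw [hP0, hPt0] at h0
    linarith
  -- θ must be positive
  have ht0mem : t0 ∈ Set.Icc (0:ℝ) 1 := ⟨ht0pos.le, by linarith⟩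
  have hθpos : 0 < θ := by
    rcases hθ0.lt_or_eq with h | h
    · exact h
    · exfalso
      have hcs := hCS t0 ht0mem
      rw [← h] at hcs
      nlinarith [hχt0, hr1, hcs]
  -- χ is positive on [t0, 1]
  have hsub2 : Set.Icc t0 (1:ℝ) ⊆ Set.Icc (0:ℝ) 1 := Set.Icc_subset_Icc ht0pos.le le_rfl
  have hχpos : ∀ t ∈ Set.Icc t0 (1:ℝ), 0 < χ t := by
    intro t ht
    have hmono := hχmono ht0mem (hsub2 ht) ht.1
    linarith [hχt0, hr1]
  -- the ODE comparison: 1/χ + t/θ is antitone on [t0, 1]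
  have hG2anti : AntitoneOn (fun t => (χ t)⁻¹ + t / θ) (Set.Icc t0 (1:ℝ)) := by
    apply antitoneOn_of_deriv_nonpos (convex_Icc t0 1)
    · intro t ht
      exact (((hderiv t (hsub2 ht)).inv (hχpos t ht).ne').add
        ((hasDerivAt_id' (x := t)).div_const θ)).continuousAt.continuousWithinAt
    · intro t ht
      rw [interior_Icc] at ht
      have ht' := Set.Ioo_subset_Icc_self ht
      exact (((hderiv t (hsub2 ht')).inv (hχpos t ht').ne').add
        ((hasDerivAt_id' (x := t)).div_const θ)).differentiableAt.differentiableWithinAt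
    · intro t ht
      rw [interior_Icc] at ht
      have ht' := Set.Ioo_subset_Icc_self ht
      rw [show deriv (fun t => (χ t)⁻¹ + t / θ) t = _ from (((hderiv t (hsub2 ht')).inv (hχpos t ht').ne').add
        ((hasDerivAt_id' (x := t)).div_const θ)).deriv]
      have hcs := hCS t (hsub2 ht')
      have hχp := hχpos t ht'
      have h1 : 1 / θ ≤ ψ2 t / (χ t) ^ 2 := by
        rw [div_le_div_iff₀ hθpos (by positivity)]
        nlinarith [hcs]
      have h2 : -ψ2 t / (χ t) ^ 2 = -(ψ2 t / (χ t) ^ 2) := by ring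
      rw [h2]
      linarith
  -- conclude
  have h1mem : (1:ℝ) ∈ Set.Icc t0 (1:ℝ) := ⟨by linarith, le_rfl⟩
  have ht0mem2 : t0 ∈ Set.Icc t0 (1:ℝ) := ⟨le_rfl, by linarith⟩
  have hfin : (χ 1)⁻¹ + 1 / θ ≤ (χ t0)⁻¹ + t0 / θ := by
    have := hG2anti ht0mem2 h1mem (by linarith)
    simpa using this
  have hinv1 : 0 < (χ 1)⁻¹ := inv_pos.2 (hχpos 1 h1mem)
  have hAt0 : 0 < χ t0 := hχpos t0 ht0mem2
  have h1' : (1 - t0) / θ < (χ t0)⁻¹ := by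
    have hstep : 1 / θ - t0 / θ < (χ t0)⁻¹ := by linarith
    calc (1 - t0) / θ = 1 / θ - t0 / θ := by ring
      _ < _ := hstep
  have h2' : (χ t0)⁻¹ ≤ 24 / (7 * r) := by
    have hh : (χ t0)⁻¹ ≤ (7 * r / 24)⁻¹ :=
      inv_anti₀ (by positivity) hχt0
    calc (χ t0)⁻¹ ≤ (7 * r / 24)⁻¹ := hh
      _ = 24 / (7 * r) := by rw [inv_div]
  have h3' : (1 - t0) / θ < 24 / (7 * r) := lt_of_lt_of_le h1' h2'
  rw [div_lt_div_iff₀ hθpos (by positivity : (0:ℝ) < 7 * r)] at h3'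
  have hr4 : 4 * θ + 2 ≤ r := by rw [hK] at hrK; linarith
  nlinarith [h3', ht0r, hr4, hθ0]
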